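/- Let r₁, r₂ ≥ 0 be integers and N = r₁ + 2r₂. Let ε₁, …, ε_{r₁} ∈ {0,1}, let k₁ ≥ k₂ ≥ … ≥ k_{r₂} be integers with each k_j ≥ 2, and let s₁, …, s_{r₁+r₂} ∈ ℂ. For 1 ≤ i < k ≤ r₁ let ε_{ik} ∈ {0,1} with ε_{ik} ≡ ε_i + ε_k (mod 2), and for j ≤ r₂ let ε′_j ∈ {0,1} with ε′_j ≡ k_j (mod 2). Define L_∞(s) := [∏_{j=1}^{r₂} Γ_ℝ(s + 2s_{r₁+j} + ε′_j)] · [∏_{i ≤ r₁, j ≤ r₂} Γ_ℂ(s + s_i + s_{r₁+j} + (k_j−1)/2)] · [∏_{1 ≤ i < k ≤ r₁} Γ_ℝ(s + s_i + s_k + ε_{ik})] · [∏_{1 ≤ j < ℓ ≤ r₂} Γ_ℂ(s + s_{r₁+j} + s_{r₁+ℓ} + (k_j + k_ℓ − 2)/2) · Γ_ℂ(s + s_{r₁+j} + s_{r₁+ℓ} + (k_j − k_ℓ)/2)], and let L̃_∞(s) be the same expression with every s_i replaced by −s_i. Define λ ∈ ℂ^N and δ ∈ {0,1}^N by: λ_i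 = −s_i and δ_i = ε_i for 1 ≤ i ≤ r₁; λ_{r₁+2j−1} = −s_{r₁+j} − (k_j−1)/2, λ_{r₁+2j} = −s_{r₁+j} + (k_j−1)/2, δ_{r₁+2j−1} = ε′_j, δ_{r₁+2j} = 0 for 1 ≤ j ≤ r₂. Set ω := ∏_{1 ≤ i < k ≤ r₁} i^{−ε_{ik}} · ∏_{j=1}^{r₂} i^{k_j(2j−N) − ε′_j}. Then for every s ∈ ℂ such that s − λ_i − λ_j ∉ ℤ for all 1 ≤ i < j ≤ N, one has L_∞(s) = ω · L̃_∞(1−s) · ∏_{1 ≤ i < j ≤ N} G_{δ_i + δ_j mod 2}(s − λ_i − λ_j). -/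
import Mathlib


/-- `Γ_ℝ(s) = π^{-s/2} Γ(s/2)`. -/
noncomputable def GammaR (s : ℂ) : ℂ :=
  (Real.pi : ℂ) ^ (-s / 2) * Complex.Gamma (s / 2)

/-- `Γ_ℂ(s) = 2 (2π)^{-s} Γ(s)`. -/
noncomputable def GammaC (s : ℂ) : ℂ := 2 * (2 * (Real.pi : ℂ)) ^ (-s) * Complex.Gamma s

/-- `G₀(s) = 2 (2π)^{−s} Γ(s) cos(πs/2)`. -/
noncomputable def G0 (s : ℂ) : ℂ :=
  2 * (2 * (Real.pi : ℂ)) ^ (-s) * Complex.Gamma s * Complex.cos ((Real.pi : ℂ) * s / 2)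

/-- `G₁(s) = 2i (2π)^{−s} Γ(s) sin(πs/2)`. -/
noncomputable def G1 (s : ℂ) : ℂ :=
  2 * Complex.I * (2 * (Real.pi : ℂ)) ^ (-s) * Complex.Gamma s *
    Complex.sin ((Real.pi : ℂ) * s / 2)

/-- `G_δ` for `δ` of a given parity. -/
noncomputable def Gd (d : ℕ) (s : ℂ) : ℂ := if d % 2 = 0 then G0 s else G1 s

/-- The archimedean `L`-factor
`L_∞(s) = [∏_j Γ_ℝ(s + 2s_{r₁+j} + ε′_j)] · [∏_{i,j} Γ_ℂ(s + s_i + s_{r₁+j} + (k_j−1)/2)]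
 · [∏_{i<k} Γ_ℝ(s + s_i + s_k + ε_{ik})]
 · [∏_{j<ℓ} Γ_ℂ(s + s_{r₁+j} + s_{r₁+ℓ} + (k_j+k_ℓ−2)/2) Γ_ℂ(s + s_{r₁+j} + s_{r₁+ℓ} + (k_j−k_ℓ)/2)]`,
with `s1 : Fin r₁ → ℂ` the parameters `s_1,…,s_{r₁}` and `s2 : Fin r₂ → ℂ` the
parameters `s_{r₁+1},…,s_{r₁+r₂}`. -/
noncomputable def LInf (r₁ r₂ : ℕ) (ε' : Fin r₂ → ℕ) (E : Fin r₁ → Fin r₁ → ℕ)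
    (k : Fin r₂ → ℕ) (s1 : Fin r₁ → ℂ) (s2 : Fin r₂ → ℂ) (s : ℂ) : ℂ :=
  (∏ j : Fin r₂, GammaR (s + 2 * s2 j + (ε' j : ℂ))) *
  (∏ i : Fin r₁, ∏ j : Fin r₂, GammaC (s + s1 i + s2 j + ((k j : ℂ) - 1) / 2)) *
  (∏ p ∈ Finset.univ.filter (fun p : Fin r₁ × Fin r₁ => p.1 < p.2),
      GammaR (s + s1 p.1 + s1 p.2 + (E p.1 p.2 : ℂ))) *
  (∏ p ∈ Finset.univ.filter (fun p : Fin r₂ × Fin r₂ => p.1 < p.2),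
      GammaC (s + s2 p.1 + s2 p.2 + ((k p.1 : ℂ) + (k p.2 : ℂ) - 2) / 2) *
      GammaC (s + s2 p.1 + s2 p.2 + ((k p.1 : ℂ) - (k p.2 : ℂ)) / 2))


section Helpers
open Complex Finset

lemma pi_ne' : ((Real.pi : ℝ) : ℂ) ≠ 0 := Complex.ofReal_ne_zero.mpr Real.pi_ne_zero
lemma two_pi_ne' : (2 * ((Real.pi : ℝ) : ℂ)) ≠ 0 := mul_ne_zero two_ne_zero pi_ne'

lemma Gd_even' {d : ℕ} (h : d % 2 = 0) : Gd d = G0 := by funext s; simp [Gd, h]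
lemma Gd_odd' {d : ℕ} (h : d % 2 = 1) : Gd d = G1 := by funext s; simp [Gd, h]

lemma cos_shift' (x : ℂ) (m : ℕ) :
    Complex.cos (x + m * Real.pi) = (-1)^m * Complex.cos x := by
  induction m with
  | zero => simp
  | succ m ih =>
      have h : x + (↑(m+1) : ℂ) * Real.pi = (x + m * Real.pi) + Real.pi := by push_cast; ring
      rw [h, Complex.cos_add_pi, ih, pow_succ]; ring

lemma sin_shift' (x : ℂ) (m : ℕ) :
    Complex.sin (x + m * Real.pi) = (-1)^m * Complex.sin x := by
  induction m with
  | zero => simp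
  | succ m ih =>
      have h : x + (↑(m+1) : ℂ) * Real.pi = (x + m * Real.pi) + Real.pi := by push_cast; ring
      rw [h, Complex.sin_add_pi, ih, pow_succ]; ring

lemma cos_shift_half' (x : ℂ) : Complex.cos (x + (Real.pi : ℂ)/2) = -Complex.sin x := by
  rw [Complex.cos_add]; simp

lemma sin_shift_half' (x : ℂ) : Complex.sin (x + (Real.pi : ℂ)/2) = Complex.cos x := by
  rw [Complex.sin_add]; simp

lemma neg_one_pow_sq' (m : ℕ) : (-1:ℂ)^m * (-1:ℂ)^m = 1 := by
  rw [← pow_add]; exact Even.neg_one_pow ⟨m, rfl⟩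

lemma I_zpow_neg_two_mul' (m : ℕ) : Complex.I ^ (-(2 * (m:ℤ))) = (-1 : ℂ)^m := by
  have h1 : Complex.I ^ ((2 * (m:ℤ))) = (-1:ℂ)^m := by
    have h : ((2:ℤ) * m) = ((2 * m : ℕ) : ℤ) := by push_cast; ring
    rw [h, zpow_natCast, pow_mul, Complex.I_sq]
  rw [zpow_neg, h1]
  rcases Nat.even_or_odd m with h | h
  · rw [h.neg_one_pow]; norm_num
  · rw [h.neg_one_pow]; norm_num

lemma GammaC_reflect (n d1 d2 : ℕ) (hpar : (d1 + d2 + n) % 2 = 1) (w : ℂ)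
    (hw : ∀ m : ℤ, w ≠ (m:ℂ)) :
    GammaC (w + n) = Complex.I ^ (-(n:ℤ) - 1) * Gd d1 (w + n) * Gd d2 w * GammaC (1 - w) := by
  have hS : Complex.sin ((Real.pi:ℂ) * w) ≠ 0 := by
    refine Complex.sin_ne_zero_iff.mpr fun k hk => hw k ?_
    have := mul_left_cancel₀ pi_ne' (hk.trans (mul_comm (k:ℂ) (Real.pi:ℂ)))
    exact this
  have hG : Complex.Gamma w * Complex.Gamma (1 - w) * Complex.sin ((Real.pi:ℂ) * w)
      = (Real.pi:ℂ) := by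
    rw [Complex.Gamma_mul_Gamma_one_sub]; field_simp
  have hP : (2 * (Real.pi:ℂ)) ^ (-w) * (2 * (Real.pi:ℂ)) ^ (-(1 - w)) * (2 * (Real.pi:ℂ))
      = 1 := by
    rw [← cpow_add _ _ two_pi_ne', show (-w) + -(1 - w) = -1 by ring, cpow_neg_one]
    exact inv_mul_cancel₀ two_pi_ne'
  have hsin2 : Complex.sin ((Real.pi:ℂ) * w)
      = 2 * Complex.sin ((Real.pi:ℂ) * w / 2) * Complex.cos ((Real.pi:ℂ) * w / 2) := by
    have h := Complex.sin_two_mul ((Real.pi:ℂ) * w / 2)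
    rw [show 2 * ((Real.pi:ℂ) * w / 2) = (Real.pi:ℂ) * w by ring] at h
    exact h
  rcases Nat.even_or_odd n with ⟨m, hm⟩ | ⟨m, hm⟩
  · have harg : (Real.pi:ℂ) * (w + (n:ℂ)) / 2 = (Real.pi:ℂ) * w / 2 + (m:ℂ) * Real.pi := by
      push_cast [hm]; ring
    have hIe : Complex.I ^ (-(n:ℤ) - 1) * Complex.I = (-1:ℂ)^m := by
      rw [zpow_sub_one₀ Complex.I_ne_zero, show (-(n:ℤ)) = -(2*(m:ℤ)) by omega,
        I_zpow_neg_two_mul', mul_assoc, inv_mul_cancel₀ Complex.I_ne_zero, mul_one]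
    rcases Nat.even_or_odd d1 with hd1 | hd1
    · have h1 : d1 % 2 = 0 := Nat.even_iff.mp hd1
      have h2 : d2 % 2 = 1 := by omega
      have hkey : Complex.I ^ (-(n:ℤ) - 1) * Complex.I *
          (2 * Complex.cos ((Real.pi:ℂ) * (w + (n:ℂ)) / 2)
             * Complex.sin ((Real.pi:ℂ) * w / 2))
          = Complex.sin ((Real.pi:ℂ) * w) := by
        rw [harg, cos_shift', hsin2, hIe]
        linear_combination (2 * Complex.cos ((Real.pi:ℂ) * w / 2)
          * Complex.sin ((Real.pi:ℂ) * w / 2)) * neg_one_pow_sq' m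
      rw [Gd_even' h1, Gd_odd' h2]
      simp only [GammaC, G0, G1]
      linear_combination
        (-(4 * (2 * (Real.pi:ℂ)) ^ (-(w + (n:ℂ))) * (2 * (Real.pi:ℂ)) ^ (-w)
           * (2 * (Real.pi:ℂ)) ^ (-(1 - w)) * Complex.Gamma (w + (n:ℂ))
           * Complex.Gamma w * Complex.Gamma (1 - w))) * hkey
        + (-(4 * (2 * (Real.pi:ℂ)) ^ (-(w + (n:ℂ))) * (2 * (Real.pi:ℂ)) ^ (-w)
           * (2 * (Real.pi:ℂ)) ^ (-(1 - w)) * Complex.Gamma (w + (n:ℂ)))) * hG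
        + (-(2 * (2 * (Real.pi:ℂ)) ^ (-(w + (n:ℂ))) * Complex.Gamma (w + (n:ℂ)))) * hP
    · have h1 : d1 % 2 = 1 := Nat.odd_iff.mp hd1
      have h2 : d2 % 2 = 0 := by omega
      have hkey : Complex.I ^ (-(n:ℤ) - 1) * Complex.I *
          (2 * Complex.sin ((Real.pi:ℂ) * (w + (n:ℂ)) / 2)
             * Complex.cos ((Real.pi:ℂ) * w / 2))
          = Complex.sin ((Real.pi:ℂ) * w) := by
        rw [harg, sin_shift', hsin2, hIe]
        linear_combination (2 * Complex.cos ((Real.pi:ℂ) * w / 2)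
          * Complex.sin ((Real.pi:ℂ) * w / 2)) * neg_one_pow_sq' m
      rw [Gd_odd' h1, Gd_even' h2]
      simp only [GammaC, G0, G1]
      linear_combination
        (-(4 * (2 * (Real.pi:ℂ)) ^ (-(w + (n:ℂ))) * (2 * (Real.pi:ℂ)) ^ (-w)
           * (2 * (Real.pi:ℂ)) ^ (-(1 - w)) * Complex.Gamma (w + (n:ℂ))
           * Complex.Gamma w * Complex.Gamma (1 - w))) * hkey
        + (-(4 * (2 * (Real.pi:ℂ)) ^ (-(w + (n:ℂ))) * (2 * (Real.pi:ℂ)) ^ (-w)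
           * (2 * (Real.pi:ℂ)) ^ (-(1 - w)) * Complex.Gamma (w + (n:ℂ)))) * hG
        + (-(2 * (2 * (Real.pi:ℂ)) ^ (-(w + (n:ℂ))) * Complex.Gamma (w + (n:ℂ)))) * hP
  · have harg : (Real.pi:ℂ) * (w + (n:ℂ)) / 2
        = ((Real.pi:ℂ) * w / 2 + (Real.pi:ℂ)/2) + (m:ℂ) * Real.pi := by
      push_cast [hm]; ring
    have hIe : Complex.I ^ (-(n:ℤ) - 1) = (-1:ℂ)^(m+1) := by
      rw [show (-(n:ℤ) - 1) = -(2*((m+1:ℕ):ℤ)) by push_cast; omega, I_zpow_neg_two_mul']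
    rcases Nat.even_or_odd d1 with hd1 | hd1
    · have h1 : d1 % 2 = 0 := Nat.even_iff.mp hd1
      have h2 : d2 % 2 = 0 := by omega
      have hkey : Complex.I ^ (-(n:ℤ) - 1) *
          (2 * Complex.cos ((Real.pi:ℂ) * (w + (n:ℂ)) / 2)
             * Complex.cos ((Real.pi:ℂ) * w / 2))
          = Complex.sin ((Real.pi:ℂ) * w) := by
        rw [harg, cos_shift', cos_shift_half', hsin2, hIe]
        have := neg_one_pow_sq' (m+1)
        linear_combination (2 * Complex.cos ((Real.pi:ℂ) * w / 2)
          * Complex.sin ((Real.pi:ℂ) * w / 2)) * this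
      rw [Gd_even' h1, Gd_even' h2]
      simp only [GammaC, G0, G1]
      linear_combination
        (-(4 * (2 * (Real.pi:ℂ)) ^ (-(w + (n:ℂ))) * (2 * (Real.pi:ℂ)) ^ (-w)
           * (2 * (Real.pi:ℂ)) ^ (-(1 - w)) * Complex.Gamma (w + (n:ℂ))
           * Complex.Gamma w * Complex.Gamma (1 - w))) * hkey
        + (-(4 * (2 * (Real.pi:ℂ)) ^ (-(w + (n:ℂ))) * (2 * (Real.pi:ℂ)) ^ (-w)
           * (2 * (Real.pi:ℂ)) ^ (-(1 - w)) * Complex.Gamma (w + (n:ℂ)))) * hG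
        + (-(2 * (2 * (Real.pi:ℂ)) ^ (-(w + (n:ℂ))) * Complex.Gamma (w + (n:ℂ)))) * hP
    · have h1 : d1 % 2 = 1 := Nat.odd_iff.mp hd1
      have h2 : d2 % 2 = 1 := by omega
      have hIe2 : Complex.I ^ (-(n:ℤ) - 1) * Complex.I * Complex.I = -(-1:ℂ)^(m+1) := by
        rw [hIe, mul_assoc, Complex.I_mul_I]; ring
      have hkey : Complex.I ^ (-(n:ℤ) - 1) * Complex.I * Complex.I *
          (2 * Complex.sin ((Real.pi:ℂ) * (w + (n:ℂ)) / 2)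
             * Complex.sin ((Real.pi:ℂ) * w / 2))
          = Complex.sin ((Real.pi:ℂ) * w) := by
        rw [harg, sin_shift', sin_shift_half', hsin2, hIe2]
        have h4 : -(-1:ℂ)^(m+1) * (-1:ℂ)^m = 1 := by
          rw [pow_succ]; linear_combination neg_one_pow_sq' m
        linear_combination (2 * Complex.cos ((Real.pi:ℂ) * w / 2)
          * Complex.sin ((Real.pi:ℂ) * w / 2)) * h4
      rw [Gd_odd' h1, Gd_odd' h2]
      simp only [GammaC, G0, G1]
      linear_combination
        (-(4 * (2 * (Real.pi:ℂ)) ^ (-(w + (n:ℂ))) * (2 * (Real.pi:ℂ)) ^ (-w)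
           * (2 * (Real.pi:ℂ)) ^ (-(1 - w)) * Complex.Gamma (w + (n:ℂ))
           * Complex.Gamma w * Complex.Gamma (1 - w))) * hkey
        + (-(4 * (2 * (Real.pi:ℂ)) ^ (-(w + (n:ℂ))) * (2 * (Real.pi:ℂ)) ^ (-w)
           * (2 * (Real.pi:ℂ)) ^ (-(1 - w)) * Complex.Gamma (w + (n:ℂ)))) * hG
        + (-(2 * (2 * (Real.pi:ℂ)) ^ (-(w + (n:ℂ))) * Complex.Gamma (w + (n:ℂ)))) * hP

lemma pi_cpow_add' (a b : ℂ) :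
    (Real.pi:ℂ)^a * (Real.pi:ℂ)^b = (Real.pi:ℂ)^(a+b) := (cpow_add _ _ pi_ne').symm

lemma sqrt_pi_eq' : ((Real.sqrt Real.pi : ℝ) : ℂ) = (Real.pi : ℂ) ^ ((2:ℂ))⁻¹ := by
  rw [Real.sqrt_eq_rpow, Complex.ofReal_cpow Real.pi_pos.le]; norm_num

lemma sqrt_pi_ne' : ((Real.sqrt Real.pi : ℝ) : ℂ) ≠ 0 :=
  Complex.ofReal_ne_zero.mpr (Real.sqrt_ne_zero'.mpr Real.pi_pos)

lemma two_cpow_ne' (a : ℂ) : (2:ℂ) ^ a ≠ 0 := by simp [Complex.cpow_eq_zero_iff]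

lemma two_pi_split' (a : ℂ) : (2 * (Real.pi:ℂ)) ^ a = (2:ℂ)^a * (Real.pi:ℂ)^a := by
  have h := mul_cpow_ofReal_nonneg (by norm_num : (0:ℝ) ≤ 2) Real.pi_pos.le a
  push_cast at h; exact h

lemma pi_pow_comb' (a b c : ℂ) (h : a + b + 1 = c + 2⁻¹) :
    (Real.pi:ℂ)^a * (Real.pi:ℂ)^b * (Real.pi:ℂ)
      = (Real.pi:ℂ)^c * ((Real.sqrt Real.pi : ℝ) : ℂ) := by
  rw [sqrt_pi_eq']
  nth_rewrite 3 [show (Real.pi:ℂ) = (Real.pi:ℂ)^(1:ℂ) from (cpow_one _).symm]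
  rw [pi_cpow_add', pi_cpow_add', pi_cpow_add', h]

lemma hpow0' (z : ℂ) : 2 * (2 * (Real.pi:ℂ)) ^ (-z) * (Real.pi:ℂ) ^ (-(1-z)/2) * (Real.pi:ℂ)
    = (Real.pi:ℂ) ^ (-z/2) * (2:ℂ) ^ (1 - z) * ((Real.sqrt Real.pi : ℝ) : ℂ) := by
  rw [two_pi_split']
  have e2 : (2:ℂ) * (2:ℂ)^(-z) = (2:ℂ)^(1-z) := by
    rw [show (1:ℂ) - z = 1 + -z by ring, cpow_add _ _ two_ne_zero, cpow_one]
  have epi := pi_pow_comb' (-z) (-(1-z)/2) (-z/2) (by ring)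
  calc 2 * ((2:ℂ)^(-z) * (Real.pi:ℂ)^(-z)) * (Real.pi:ℂ) ^ (-(1-z)/2) * (Real.pi:ℂ)
      = (2 * (2:ℂ)^(-z)) * ((Real.pi:ℂ)^(-z) * (Real.pi:ℂ)^(-(1-z)/2) * (Real.pi:ℂ)) := by ring
    _ = _ := by rw [e2, epi]; ring

lemma hpow1' (z : ℂ) : 2 * (2 * (Real.pi:ℂ)) ^ (-z) * (Real.pi:ℂ) ^ (-(1-z+1)/2) * (Real.pi:ℂ)
    = (Real.pi:ℂ) ^ (-(z+1)/2) * (2:ℂ) ^ (1 - z) * ((Real.sqrt Real.pi : ℝ) : ℂ) := by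
  rw [two_pi_split']
  have e2 : (2:ℂ) * (2:ℂ)^(-z) = (2:ℂ)^(1-z) := by
    rw [show (1:ℂ) - z = 1 + -z by ring, cpow_add _ _ two_ne_zero, cpow_one]
  have epi := pi_pow_comb' (-z) (-(1-z+1)/2) (-(z+1)/2) (by ring)
  calc 2 * ((2:ℂ)^(-z) * (Real.pi:ℂ)^(-z)) * (Real.pi:ℂ) ^ (-(1-z+1)/2) * (Real.pi:ℂ)
      = (2 * (2:ℂ)^(-z)) * ((Real.pi:ℂ)^(-z) * (Real.pi:ℂ)^(-(1-z+1)/2) * (Real.pi:ℂ)) := by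
        ring
    _ = _ := by rw [e2, epi]; ring

lemma GammaR_reflect (e d : ℕ) (he : e = 0 ∨ e = 1) (hd : d % 2 = e % 2) (z : ℂ)
    (hz : ∀ m : ℤ, z ≠ (m:ℂ)) :
    GammaR (z + e) = Complex.I ^ (-(e:ℤ)) * Gd d z * GammaR (1 - z + e) := by
  have hdup : Complex.Gamma (z/2) * Complex.Gamma (z/2 + 1/2)
      = Complex.Gamma z * (2:ℂ)^(1-z) * ((Real.sqrt Real.pi : ℝ) : ℂ) := by
    have h := Complex.Gamma_mul_Gamma_add_half (z/2)
    rw [show 2*(z/2) = z by ring] at h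
    exact h
  have hΓh2_ne : Complex.Gamma (z/2 + 1/2) ≠ 0 := by
    refine Complex.Gamma_ne_zero fun m hm => hz (-(2*(m:ℤ))-1) ?_
    push_cast
    linear_combination 2*hm
  have hΓh1_ne : Complex.Gamma (z/2) ≠ 0 := by
    refine Complex.Gamma_ne_zero fun m hm => hz (-(2*(m:ℤ))) ?_
    push_cast
    linear_combination 2*hm
  rcases he with rfl | rfl
  · have hd0 : d % 2 = 0 := by omega
    have hC : Complex.cos ((Real.pi:ℂ) * z / 2) ≠ 0 := by
      refine Complex.cos_ne_zero_iff.mpr fun kk hk => hz (2*kk+1) ?_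
      have h2 : (Real.pi:ℂ) * z = (Real.pi:ℂ) * (2*(kk:ℂ)+1) := by linear_combination 2*hk
      have := mul_left_cancel₀ pi_ne' h2
      push_cast
      exact this
    have hrefl0 : Complex.Gamma ((1-z)/2) * Complex.Gamma (z/2 + 1/2)
        * Complex.cos ((Real.pi:ℂ) * z / 2) = (Real.pi:ℂ) := by
      have h := Complex.Gamma_mul_Gamma_one_sub ((1-z)/2)
      rw [show (1:ℂ) - (1-z)/2 = z/2 + 1/2 by ring,
        show (Real.pi:ℂ) * ((1-z)/2) = (Real.pi:ℂ)/2 - (Real.pi:ℂ)*z/2 by ring,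
        Complex.sin_pi_div_two_sub, eq_div_iff hC] at h
      exact h
    rw [Gd_even' hd0]
    simp only [Nat.cast_zero, add_zero, neg_zero, zpow_zero, one_mul, GammaR, G0]
    apply mul_left_cancel₀ (mul_ne_zero (mul_ne_zero (mul_ne_zero (two_cpow_ne' (1-z))
      sqrt_pi_ne') hΓh2_ne) hC)
    linear_combination
      ((2 * (2*(Real.pi:ℂ))^(-z) * Complex.cos ((Real.pi:ℂ)*z/2)^2 * (Real.pi:ℂ)^(-(1-z)/2)
        * Complex.Gamma ((1-z)/2) * Complex.Gamma (z/2+1/2))) * hdup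
      + (-(2 * (2*(Real.pi:ℂ))^(-z) * Complex.cos ((Real.pi:ℂ)*z/2) * (Real.pi:ℂ)^(-(1-z)/2)
        * Complex.Gamma (z/2) * Complex.Gamma (z/2+1/2))) * hrefl0
      + (-(Complex.cos ((Real.pi:ℂ)*z/2) * Complex.Gamma (z/2) * Complex.Gamma (z/2+1/2)))
        * hpow0' z
  · have hd1 : d % 2 = 1 := by omega
    have hS : Complex.sin ((Real.pi:ℂ) * z / 2) ≠ 0 := by
      refine Complex.sin_ne_zero_iff.mpr fun kk hk => hz (2*kk) ?_
      have h2 : (Real.pi:ℂ) * z = (Real.pi:ℂ) * (2*(kk:ℂ)) := by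
        linear_combination 2*hk
      have := mul_left_cancel₀ pi_ne' h2
      push_cast
      exact this
    have hrefl1 : Complex.Gamma (z/2) * Complex.Gamma (1 - z/2)
        * Complex.sin ((Real.pi:ℂ) * z / 2) = (Real.pi:ℂ) := by
      have h := Complex.Gamma_mul_Gamma_one_sub (z/2)
      rw [show (Real.pi:ℂ) * (z/2) = (Real.pi:ℂ)*z/2 by ring, eq_div_iff hS] at h
      exact h
    have hI : Complex.I ^ (-(1:ℤ)) * Complex.I = 1 := by
      rw [zpow_neg, zpow_one]; exact inv_mul_cancel₀ Complex.I_ne_zero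
    rw [Gd_odd' hd1]
    simp only [Nat.cast_one, GammaR, G1]
    rw [show (z+1)/2 = z/2 + 1/2 by ring, show (1-z+1)/2 = 1 - z/2 by ring]
    apply mul_left_cancel₀ (mul_ne_zero (mul_ne_zero (mul_ne_zero (two_cpow_ne' (1-z))
      sqrt_pi_ne') hΓh1_ne) hS)
    linear_combination
      (-(2 * (2*(Real.pi:ℂ))^(-z) * Complex.Gamma z * Complex.sin ((Real.pi:ℂ)*z/2)^2
        * (Real.pi:ℂ)^(-(1-z+1)/2) * Complex.Gamma (1-z/2) * (2:ℂ)^(1-z)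
        * ((Real.sqrt Real.pi : ℝ) : ℂ) * Complex.Gamma (z/2))) * hI
      + ((2 * (2*(Real.pi:ℂ))^(-z) * Complex.sin ((Real.pi:ℂ)*z/2)^2 * (Real.pi:ℂ)^(-(1-z+1)/2)
        * Complex.Gamma (1-z/2) * Complex.Gamma (z/2))) * hdup
      + (-(2 * (2*(Real.pi:ℂ))^(-z) * Complex.sin ((Real.pi:ℂ)*z/2) * (Real.pi:ℂ)^(-(1-z+1)/2)
        * Complex.Gamma (z/2) * Complex.Gamma (z/2+1/2))) * hrefl1
      + (-(Complex.sin ((Real.pi:ℂ)*z/2) * Complex.Gamma (z/2) * Complex.Gamma (z/2+1/2)))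
        * hpow1' z

def emA (r₁ r₂ : ℕ) (i : Fin r₁) : Fin (r₁ + 2*r₂) :=
  ⟨i.1, by have := i.2; omega⟩
def emB (r₁ r₂ : ℕ) (j : Fin r₂) (t : Fin 2) : Fin (r₁ + 2*r₂) :=
  ⟨r₁ + 2*j.1 + t.1, by have := j.2; have := t.2; omega⟩

lemma finval0 : ((0 : Fin 2) : ℕ) = 0 := rfl
lemma finval1 : ((1 : Fin 2) : ℕ) = 1 := rfl

variable {M : Type*} [CommMonoid M]

lemma pair_decomp (r₁ r₂ : ℕ) (f : Fin (r₁+2*r₂) → Fin (r₁+2*r₂) → M) :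
    ∏ p ∈ Finset.univ.filter (fun p : Fin (r₁+2*r₂) × Fin (r₁+2*r₂) => p.1 < p.2), f p.1 p.2
    = (∏ p ∈ Finset.univ.filter (fun p : Fin r₁ × Fin r₁ => p.1 < p.2),
          f (emA r₁ r₂ p.1) (emA r₁ r₂ p.2))
      * (∏ i : Fin r₁, ∏ j : Fin r₂,
          f (emA r₁ r₂ i) (emB r₁ r₂ j 0) * f (emA r₁ r₂ i) (emB r₁ r₂ j 1))
      * (∏ j : Fin r₂, f (emB r₁ r₂ j 0) (emB r₁ r₂ j 1))
      * (∏ p ∈ Finset.univ.filter (fun p : Fin r₂ × Fin r₂ => p.1 < p.2),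
          (f (emB r₁ r₂ p.1 0) (emB r₁ r₂ p.2 0) * f (emB r₁ r₂ p.1 0) (emB r₁ r₂ p.2 1))
          * (f (emB r₁ r₂ p.1 1) (emB r₁ r₂ p.2 0) * f (emB r₁ r₂ p.1 1) (emB r₁ r₂ p.2 1))) := by
  classical
  have L1 : ∏ q ∈ Finset.univ.filter
        (fun a : Fin (r₁+2*r₂) × Fin (r₁+2*r₂) => a.1 < a.2 ∧ a.2.1 < r₁), f q.1 q.2
      = ∏ p ∈ Finset.univ.filter (fun p : Fin r₁ × Fin r₁ => p.1 < p.2),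
          f (emA r₁ r₂ p.1) (emA r₁ r₂ p.2) := by
    refine Finset.prod_bij'
      (fun q hq => ((⟨q.1.1, (by
          obtain ⟨h1, h2⟩ := (Finset.mem_filter.mp hq).2
          exact (Fin.lt_def.mp h1).trans h2)⟩ : Fin r₁),
        (⟨q.2.1, (by exact (Finset.mem_filter.mp hq).2.2)⟩ : Fin r₁)))
      (fun p _ => (emA r₁ r₂ p.1, emA r₁ r₂ p.2)) ?_ ?_ ?_ ?_ ?_
    · intro a ha
      simp only [Finset.mem_filter, Finset.mem_univ, true_and, Fin.lt_def] at ha ⊢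
      exact ha.1
    · intro a ha
      simp only [Finset.mem_filter, Finset.mem_univ, true_and, Fin.lt_def] at ha
      simp only [Finset.mem_filter, Finset.mem_univ, true_and, Fin.lt_def, emA]
      exact ⟨ha, a.2.2⟩
    · intro a ha; rfl
    · intro a ha; rfl
    · intro a ha; rfl
  have L2 : ∏ q ∈ Finset.univ.filter
        (fun a : Fin (r₁+2*r₂) × Fin (r₁+2*r₂) =>
          (a.1 < a.2 ∧ ¬ a.2.1 < r₁) ∧ a.1.1 < r₁), f q.1 q.2
      = ∏ i : Fin r₁, ∏ j : Fin r₂,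
          f (emA r₁ r₂ i) (emB r₁ r₂ j 0) * f (emA r₁ r₂ i) (emB r₁ r₂ j 1) := by
    rw [show (∏ i : Fin r₁, ∏ j : Fin r₂,
          f (emA r₁ r₂ i) (emB r₁ r₂ j 0) * f (emA r₁ r₂ i) (emB r₁ r₂ j 1))
        = ∏ x : Fin r₁ × Fin r₂ × Fin 2, f (emA r₁ r₂ x.1) (emB r₁ r₂ x.2.1 x.2.2) by
      rw [Fintype.prod_prod_type]
      refine Finset.prod_congr rfl fun i _ => ?_
      rw [Fintype.prod_prod_type]
      refine Finset.prod_congr rfl fun j _ => ?_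
      rw [Fin.prod_univ_two]]
    refine Finset.prod_bij'
      (fun q hq => ((⟨q.1.1, (by exact (Finset.mem_filter.mp hq).2.2)⟩ : Fin r₁),
        (⟨(q.2.1 - r₁)/2, (by
          have h := (Finset.mem_filter.mp hq).2.1.2
          have h2 := q.2.isLt
          omega)⟩ : Fin r₂),
        (⟨(q.2.1 - r₁) % 2, (by omega)⟩ : Fin 2)))
      (fun x _ => (emA r₁ r₂ x.1, emB r₁ r₂ x.2.1 x.2.2)) ?_ ?_ ?_ ?_ ?_
    · intro a ha; exact Finset.mem_univ _
    · intro x _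
      simp only [Finset.mem_filter, Finset.mem_univ, true_and, Fin.lt_def, emA, emB]
      have := x.1.2; have := x.2.1.2; have := x.2.2.2
      omega
    · intro a ha
      simp only [Finset.mem_filter, Finset.mem_univ, true_and, Fin.lt_def] at ha
      refine Prod.ext (Fin.ext ?_) (Fin.ext ?_) <;> simp only [emA, emB] <;> omega
    · intro x _
      have := x.2.2.2
      refine Prod.ext (Fin.ext ?_) (Prod.ext (Fin.ext ?_) (Fin.ext ?_)) <;>
        simp only [emA, emB] <;> omega
    · intro a ha
      simp only [Finset.mem_filter, Finset.mem_univ, true_and, Fin.lt_def] at ha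
      have e1 : emA r₁ r₂ ⟨a.1.1, by omega⟩ = a.1 := Fin.ext rfl
      have e2 : emB r₁ r₂ ⟨(a.2.1 - r₁)/2, by have := a.2.isLt; omega⟩
          ⟨(a.2.1 - r₁) % 2, by omega⟩ = a.2 := Fin.ext (by simp only [emB]; omega)
      rw [e1, e2]
  have L3 : ∏ q ∈ Finset.univ.filter
        (fun a : Fin (r₁+2*r₂) × Fin (r₁+2*r₂) =>
          ((a.1 < a.2 ∧ ¬ a.2.1 < r₁) ∧ ¬ a.1.1 < r₁) ∧ (a.1.1 - r₁)/2 = (a.2.1 - r₁)/2),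
        f q.1 q.2
      = ∏ j : Fin r₂, f (emB r₁ r₂ j 0) (emB r₁ r₂ j 1) := by
    refine Finset.prod_bij'
      (fun q hq => (⟨(q.1.1 - r₁)/2, (by
        have h := (Finset.mem_filter.mp hq).2.1.2
        have h2 := q.1.isLt
        omega)⟩ : Fin r₂))
      (fun j _ => (emB r₁ r₂ j 0, emB r₁ r₂ j 1)) ?_ ?_ ?_ ?_ ?_
    · intro a ha; exact Finset.mem_univ _
    · intro j _
      simp only [Finset.mem_filter, Finset.mem_univ, true_and, Fin.lt_def, emB, finval0,
        finval1]
      have := j.2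
      omega
    · intro a ha
      simp only [Finset.mem_filter, Finset.mem_univ, true_and, Fin.lt_def] at ha
      refine Prod.ext (Fin.ext ?_) (Fin.ext ?_) <;> simp only [emB, finval0, finval1] <;> omega
    · intro j _
      refine Fin.ext ?_
      simp only [emB, finval0]
      omega
    · intro a ha
      simp only [Finset.mem_filter, Finset.mem_univ, true_and, Fin.lt_def] at ha
      have e1 : emB r₁ r₂ ⟨(a.1.1 - r₁)/2, by have := a.1.isLt; omega⟩ 0 = a.1 :=
        Fin.ext (by simp only [emB, finval0]; omega)
      have e2 : emB r₁ r₂ ⟨(a.1.1 - r₁)/2, by have := a.1.isLt; omega⟩ 1 = a.2 :=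
        Fin.ext (by simp only [emB, finval1]; omega)
      rw [e1, e2]
  have L4 : ∏ q ∈ Finset.univ.filter
        (fun a : Fin (r₁+2*r₂) × Fin (r₁+2*r₂) =>
          ((a.1 < a.2 ∧ ¬ a.2.1 < r₁) ∧ ¬ a.1.1 < r₁) ∧ ¬ (a.1.1 - r₁)/2 = (a.2.1 - r₁)/2),
        f q.1 q.2
      = ∏ p ∈ Finset.univ.filter (fun p : Fin r₂ × Fin r₂ => p.1 < p.2),
          (f (emB r₁ r₂ p.1 0) (emB r₁ r₂ p.2 0) * f (emB r₁ r₂ p.1 0) (emB r₁ r₂ p.2 1))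
          * (f (emB r₁ r₂ p.1 1) (emB r₁ r₂ p.2 0) * f (emB r₁ r₂ p.1 1) (emB r₁ r₂ p.2 1)) := by
    rw [show (∏ p ∈ Finset.univ.filter (fun p : Fin r₂ × Fin r₂ => p.1 < p.2),
          (f (emB r₁ r₂ p.1 0) (emB r₁ r₂ p.2 0) * f (emB r₁ r₂ p.1 0) (emB r₁ r₂ p.2 1))
          * (f (emB r₁ r₂ p.1 1) (emB r₁ r₂ p.2 0) * f (emB r₁ r₂ p.1 1) (emB r₁ r₂ p.2 1)))
        = ∏ q ∈ (Finset.univ.filter (fun p : Fin r₂ × Fin r₂ => p.1 < p.2)) ×ˢ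
            (Finset.univ : Finset (Fin 2 × Fin 2)),
            f (emB r₁ r₂ q.1.1 q.2.1) (emB r₁ r₂ q.1.2 q.2.2) by
      rw [Finset.prod_product]
      refine Finset.prod_congr rfl fun p _ => ?_
      rw [show (∏ y ∈ (Finset.univ : Finset (Fin 2 × Fin 2)),
            f (emB r₁ r₂ p.1 y.1) (emB r₁ r₂ p.2 y.2))
          = ∏ t₁ : Fin 2, ∏ t₂ : Fin 2, f (emB r₁ r₂ p.1 t₁) (emB r₁ r₂ p.2 t₂) from
        Fintype.prod_prod_type _]
      rw [Fin.prod_univ_two]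
      congr 1 <;> rw [Fin.prod_univ_two]]
    refine Finset.prod_bij'
      (fun q hq => (((⟨(q.1.1 - r₁)/2, (by
            have h := (Finset.mem_filter.mp hq).2.1.2
            have h2 := q.1.isLt
            omega)⟩ : Fin r₂),
          (⟨(q.2.1 - r₁)/2, (by
            have h := (Finset.mem_filter.mp hq).2.1.1.2
            have h2 := q.2.isLt
            omega)⟩ : Fin r₂)),
         ((⟨(q.1.1 - r₁) % 2, (by omega)⟩ : Fin 2),
          (⟨(q.2.1 - r₁) % 2, (by omega)⟩ : Fin 2))))
      (fun x _ => (emB r₁ r₂ x.1.1 x.2.1, emB r₁ r₂ x.1.2 x.2.2)) ?_ ?_ ?_ ?_ ?_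
    · intro a ha
      simp only [Finset.mem_filter, Finset.mem_univ, true_and, Fin.lt_def] at ha
      simp only [Finset.mem_product, Finset.mem_filter, Finset.mem_univ, true_and, Fin.lt_def]
      refine ⟨?_, trivial⟩
      omega
    · intro x hx
      simp only [Finset.mem_product, Finset.mem_filter, Finset.mem_univ, true_and,
        Fin.lt_def] at hx
      simp only [Finset.mem_filter, Finset.mem_univ, true_and, Fin.lt_def, emB]
      have := x.1.1.2; have := x.1.2.2; have := x.2.1.2; have := x.2.2.2
      omega
    · intro a ha
      simp only [Finset.mem_filter, Finset.mem_univ, true_and, Fin.lt_def] at ha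
      refine Prod.ext (Fin.ext ?_) (Fin.ext ?_) <;> simp only [emB] <;> omega
    · intro x _
      have := x.2.1.2; have := x.2.2.2
      refine Prod.ext (Prod.ext (Fin.ext ?_) (Fin.ext ?_)) (Prod.ext (Fin.ext ?_) (Fin.ext ?_))
        <;> simp only [emB] <;> omega
    · intro a ha
      simp only [Finset.mem_filter, Finset.mem_univ, true_and, Fin.lt_def] at ha
      have e1 : emB r₁ r₂ ⟨(a.1.1 - r₁)/2, by have := a.1.isLt; omega⟩
          ⟨(a.1.1 - r₁) % 2, by omega⟩ = a.1 := Fin.ext (by simp only [emB]; omega)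
      have e2 : emB r₁ r₂ ⟨(a.2.1 - r₁)/2, by have := a.2.isLt; omega⟩
          ⟨(a.2.1 - r₁) % 2, by omega⟩ = a.2 := Fin.ext (by simp only [emB]; omega)
      rw [e1, e2]
  rw [← Finset.prod_filter_mul_prod_filter_not
      (Finset.univ.filter (fun p : Fin (r₁+2*r₂) × Fin (r₁+2*r₂) => p.1 < p.2))
      (fun p => p.2.1 < r₁) (fun p => f p.1 p.2)]
  rw [← Finset.prod_filter_mul_prod_filter_not
      ((Finset.univ.filter (fun p : Fin (r₁+2*r₂) × Fin (r₁+2*r₂) => p.1 < p.2)).filter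
        (fun p => ¬ p.2.1 < r₁))
      (fun p => p.1.1 < r₁) (fun p => f p.1 p.2)]
  rw [← Finset.prod_filter_mul_prod_filter_not
      (((Finset.univ.filter (fun p : Fin (r₁+2*r₂) × Fin (r₁+2*r₂) => p.1 < p.2)).filter
        (fun p => ¬ p.2.1 < r₁)).filter (fun p => ¬ p.1.1 < r₁))
      (fun p => (p.1.1 - r₁)/2 = (p.2.1 - r₁)/2) (fun p => f p.1 p.2)]
  simp only [Finset.filter_filter]
  rw [L1, L2, L3, L4]
  simp only [mul_assoc]

end Helpers

/-- the archimedean functional equation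
`L_∞(s) = ω · L̃_∞(1−s) · ∏_{1 ≤ i < j ≤ N} G_{δ_i+δ_j mod 2}(s − λ_i − λ_j)`,
where `N = r₁ + 2r₂`, `λ` and `δ` are the Casselman embedding parameters, and
`ω = ∏_{i<k} i^{−ε_{ik}} · ∏_j i^{k_j(2j−N) − ε′_j}`. -/
theorem archimedean_functional_equation (r₁ r₂ : ℕ)
    (ε : Fin r₁ → ℕ) (hε : ∀ i, ε i = 0 ∨ ε i = 1)
    (k : Fin r₂ → ℕ) (hk2 : ∀ j, 2 ≤ k j)
    (hkdec : ∀ j l : Fin r₂, j ≤ l → k l ≤ k j)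
    (s1 : Fin r₁ → ℂ) (s2 : Fin r₂ → ℂ)
    (E : Fin r₁ → Fin r₁ → ℕ)
    (hE : ∀ i l : Fin r₁, i < l → (E i l = 0 ∨ E i l = 1) ∧ E i l % 2 = (ε i + ε l) % 2)
    (ε' : Fin r₂ → ℕ) (hε' : ∀ j, (ε' j = 0 ∨ ε' j = 1) ∧ ε' j % 2 = k j % 2)
    (lam : Fin (r₁ + 2 * r₂) → ℂ)
    (hlam1 : ∀ (i : ℕ) (hi : i < r₁), lam ⟨i, by omega⟩ = -s1 ⟨i, hi⟩)
    (hlam2 : ∀ (j : ℕ) (hj : j < r₂),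
      lam ⟨r₁ + 2 * j, by omega⟩ = -s2 ⟨j, hj⟩ - ((k ⟨j, hj⟩ : ℂ) - 1) / 2 ∧
      lam ⟨r₁ + 2 * j + 1, by omega⟩ = -s2 ⟨j, hj⟩ + ((k ⟨j, hj⟩ : ℂ) - 1) / 2)
    (δ : Fin (r₁ + 2 * r₂) → ℕ)
    (hδ1 : ∀ (i : ℕ) (hi : i < r₁), δ ⟨i, by omega⟩ = ε ⟨i, hi⟩)
    (hδ2 : ∀ (j : ℕ) (hj : j < r₂),
      δ ⟨r₁ + 2 * j, by omega⟩ = ε' ⟨j, hj⟩ ∧ δ ⟨r₁ + 2 * j + 1, by omega⟩ = 0)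
    (ω : ℂ)
    (hω : ω =
      (∏ p ∈ Finset.univ.filter (fun p : Fin r₁ × Fin r₁ => p.1 < p.2),
        Complex.I ^ (-(E p.1 p.2 : ℤ))) *
      (∏ j : Fin r₂,
        Complex.I ^ ((k j : ℤ) * (2 * ((j : ℕ) + 1 : ℤ) - ((r₁ : ℤ) + 2 * (r₂ : ℤ)))
          - (ε' j : ℤ))))
    (s : ℂ)
    (hs : ∀ i j : Fin (r₁ + 2 * r₂), i < j → ∀ m : ℤ, s - lam i - lam j ≠ (m : ℂ)) :
    LInf r₁ r₂ ε' E k s1 s2 s =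
      ω * LInf r₁ r₂ ε' E k (fun i => -s1 i) (fun j => -s2 j) (1 - s) *
        ∏ p ∈ Finset.univ.filter
            (fun p : Fin (r₁ + 2 * r₂) × Fin (r₁ + 2 * r₂) => p.1 < p.2),
          Gd (δ p.1 + δ p.2) (s - lam p.1 - lam p.2) := by
  classical
  have hdA : ∀ i : Fin r₁, δ (emA r₁ r₂ i) = ε i := fun i => hδ1 i.1 i.2
  have hlA : ∀ i : Fin r₁, lam (emA r₁ r₂ i) = -s1 i := fun i => hlam1 i.1 i.2
  have hd0 : ∀ j : Fin r₂, δ (emB r₁ r₂ j 0) = ε' j := fun j => (hδ2 j.1 j.2).1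
  have hd1 : ∀ j : Fin r₂, δ (emB r₁ r₂ j 1) = 0 := fun j => (hδ2 j.1 j.2).2
  have hl0 : ∀ j : Fin r₂, lam (emB r₁ r₂ j 0) = -s2 j - ((k j : ℂ) - 1)/2 :=
    fun j => (hlam2 j.1 j.2).1
  have hl1 : ∀ j : Fin r₂, lam (emB r₁ r₂ j 1) = -s2 j + ((k j : ℂ) - 1)/2 :=
    fun j => (hlam2 j.1 j.2).2
  have hkc : ∀ j : Fin r₂, ((k j - 1 : ℕ) : ℂ) = (k j : ℂ) - 1 := fun j => by
    have := hk2 j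
    push_cast [Nat.cast_sub (by omega : 1 ≤ k j)]
    ring
  simp only [LInf]
  rw [pair_decomp r₁ r₂ (fun a b => Gd (δ a + δ b) (s - lam a - lam b))]
  rw [hω]
  have K1 : (∏ j : Fin r₂, GammaR (s + 2 * s2 j + (ε' j : ℂ)))
      = (∏ j : Fin r₂, Complex.I ^ (-(ε' j : ℤ)))
        * (∏ j : Fin r₂, Gd (δ (emB r₁ r₂ j 0) + δ (emB r₁ r₂ j 1))
            (s - lam (emB r₁ r₂ j 0) - lam (emB r₁ r₂ j 1)))
        * (∏ j : Fin r₂, GammaR (1 - s + 2 * -s2 j + (ε' j : ℂ))) := by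
    rw [← Finset.prod_mul_distrib, ← Finset.prod_mul_distrib]
    refine Finset.prod_congr rfl fun j _ => ?_
    have e1 : s - lam (emB r₁ r₂ j 0) - lam (emB r₁ r₂ j 1) = s + 2 * s2 j := by
      rw [hl0 j, hl1 j]; ring
    have hz : ∀ m : ℤ, s + 2 * s2 j ≠ (m : ℂ) := by
      intro m hcon
      refine hs (emB r₁ r₂ j 0) (emB r₁ r₂ j 1)
        (Fin.lt_def.mpr (by simp only [emB, finval0, finval1]; omega)) m ?_
      rw [e1]; exact hcon
    have hGd : Gd (δ (emB r₁ r₂ j 0) + δ (emB r₁ r₂ j 1)) = Gd (ε' j) := by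
      rw [hd0 j, hd1 j, add_zero]
    rw [e1, hGd, show (1:ℂ) - s + 2 * -s2 j + (ε' j : ℂ)
        = 1 - (s + 2 * s2 j) + (ε' j : ℂ) by ring]
    exact GammaR_reflect (ε' j) (ε' j) (hε' j).1 rfl _ hz
  have K2 : (∏ i : Fin r₁, ∏ j : Fin r₂, GammaC (s + s1 i + s2 j + ((k j : ℂ) - 1) / 2))
      = (∏ i : Fin r₁, ∏ j : Fin r₂, Complex.I ^ (-(k j : ℤ)))
        * (∏ i : Fin r₁, ∏ j : Fin r₂,
            Gd (δ (emA r₁ r₂ i) + δ (emB r₁ r₂ j 0))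
              (s - lam (emA r₁ r₂ i) - lam (emB r₁ r₂ j 0)) *
            Gd (δ (emA r₁ r₂ i) + δ (emB r₁ r₂ j 1))
              (s - lam (emA r₁ r₂ i) - lam (emB r₁ r₂ j 1)))
        * (∏ i : Fin r₁, ∏ j : Fin r₂, GammaC (1 - s + -s1 i + -s2 j + ((k j : ℂ) - 1)/2)) := by
    rw [← Finset.prod_mul_distrib, ← Finset.prod_mul_distrib]
    refine Finset.prod_congr rfl fun i _ => ?_
    rw [← Finset.prod_mul_distrib, ← Finset.prod_mul_distrib]
    refine Finset.prod_congr rfl fun j _ => ?_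
    set w := s - lam (emA r₁ r₂ i) - lam (emB r₁ r₂ j 1) with hwdef
    have ew : w = s + s1 i + s2 j - ((k j : ℂ) - 1)/2 := by
      rw [hwdef, hlA i, hl1 j]; ring
    have hw : ∀ m : ℤ, w ≠ (m : ℂ) := by
      intro m
      refine hs (emA r₁ r₂ i) (emB r₁ r₂ j 1)
        (Fin.lt_def.mpr (by simp only [emA, emB, finval1]; have := i.2; omega)) m
    have hpar : ((δ (emA r₁ r₂ i) + δ (emB r₁ r₂ j 0))
        + (δ (emA r₁ r₂ i) + δ (emB r₁ r₂ j 1)) + (k j - 1)) % 2 = 1 := by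
      rw [hdA i, hd0 j, hd1 j]
      have h1 := (hε' j).2
      have h2 := hk2 j
      omega
    have H := GammaC_reflect (k j - 1) (δ (emA r₁ r₂ i) + δ (emB r₁ r₂ j 0))
      (δ (emA r₁ r₂ i) + δ (emB r₁ r₂ j 1)) hpar w hw
    rw [show s + s1 i + s2 j + ((k j : ℂ) - 1) / 2 = w + ((k j - 1 : ℕ) : ℂ) by
        rw [hkc j, ew]; ring,
      show (1:ℂ) - s + -s1 i + -s2 j + ((k j : ℂ) - 1)/2 = 1 - w by rw [ew]; ring,
      show s - lam (emA r₁ r₂ i) - lam (emB r₁ r₂ j 0) = w + ((k j - 1 : ℕ) : ℂ) by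
        rw [hkc j, hwdef, hl0 j, hl1 j]; ring,
      show (-(k j : ℤ)) = -((k j - 1 : ℕ) : ℤ) - 1 by have := hk2 j; omega]
    rw [H]; ring
  have K3 : (∏ p ∈ Finset.univ.filter (fun p : Fin r₁ × Fin r₁ => p.1 < p.2),
        GammaR (s + s1 p.1 + s1 p.2 + (E p.1 p.2 : ℂ)))
      = (∏ p ∈ Finset.univ.filter (fun p : Fin r₁ × Fin r₁ => p.1 < p.2),
          Complex.I ^ (-(E p.1 p.2 : ℤ)))
        * (∏ p ∈ Finset.univ.filter (fun p : Fin r₁ × Fin r₁ => p.1 < p.2),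
            Gd (δ (emA r₁ r₂ p.1) + δ (emA r₁ r₂ p.2))
              (s - lam (emA r₁ r₂ p.1) - lam (emA r₁ r₂ p.2)))
        * (∏ p ∈ Finset.univ.filter (fun p : Fin r₁ × Fin r₁ => p.1 < p.2),
            GammaR (1 - s + -s1 p.1 + -s1 p.2 + (E p.1 p.2 : ℂ))) := by
    rw [← Finset.prod_mul_distrib, ← Finset.prod_mul_distrib]
    refine Finset.prod_congr rfl fun p hp => ?_
    have hplt : p.1 < p.2 := (Finset.mem_filter.mp hp).2
    have e1 : s - lam (emA r₁ r₂ p.1) - lam (emA r₁ r₂ p.2) = s + s1 p.1 + s1 p.2 := by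
      rw [hlA p.1, hlA p.2]; ring
    have hz : ∀ m : ℤ, s + s1 p.1 + s1 p.2 ≠ (m : ℂ) := by
      intro m hcon
      refine hs (emA r₁ r₂ p.1) (emA r₁ r₂ p.2)
        (Fin.lt_def.mpr (by simp only [emA]; exact Fin.lt_def.mp hplt)) m ?_
      rw [e1]; exact hcon
    have hGd : Gd (δ (emA r₁ r₂ p.1) + δ (emA r₁ r₂ p.2)) = Gd (E p.1 p.2) := by
      rw [hdA p.1, hdA p.2]
      rcases Nat.even_or_odd (ε p.1 + ε p.2) with h | h
      · rw [Gd_even' (Nat.even_iff.mp h), Gd_even' (by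
          have := (hE p.1 p.2 hplt).2; have := Nat.even_iff.mp h; omega)]
      · rw [Gd_odd' (Nat.odd_iff.mp h), Gd_odd' (by
          have := (hE p.1 p.2 hplt).2; have := Nat.odd_iff.mp h; omega)]
    rw [e1, hGd, show (1:ℂ) - s + -s1 p.1 + -s1 p.2 + (E p.1 p.2 : ℂ)
        = 1 - (s + s1 p.1 + s1 p.2) + (E p.1 p.2 : ℂ) by ring]
    exact GammaR_reflect (E p.1 p.2) (E p.1 p.2) (hE p.1 p.2 hplt).1 rfl _ hz
  have K4 : (∏ p ∈ Finset.univ.filter (fun p : Fin r₂ × Fin r₂ => p.1 < p.2),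
        GammaC (s + s2 p.1 + s2 p.2 + ((k p.1 : ℂ) + (k p.2 : ℂ) - 2) / 2) *
        GammaC (s + s2 p.1 + s2 p.2 + ((k p.1 : ℂ) - (k p.2 : ℂ)) / 2))
      = (∏ p ∈ Finset.univ.filter (fun p : Fin r₂ × Fin r₂ => p.1 < p.2),
          Complex.I ^ (-2 * (k p.1 : ℤ)))
        * (∏ p ∈ Finset.univ.filter (fun p : Fin r₂ × Fin r₂ => p.1 < p.2),
            Gd (δ (emB r₁ r₂ p.1 0) + δ (emB r₁ r₂ p.2 0))
                (s - lam (emB r₁ r₂ p.1 0) - lam (emB r₁ r₂ p.2 0)) *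
              Gd (δ (emB r₁ r₂ p.1 0) + δ (emB r₁ r₂ p.2 1))
                (s - lam (emB r₁ r₂ p.1 0) - lam (emB r₁ r₂ p.2 1)) *
            (Gd (δ (emB r₁ r₂ p.1 1) + δ (emB r₁ r₂ p.2 0))
                (s - lam (emB r₁ r₂ p.1 1) - lam (emB r₁ r₂ p.2 0)) *
              Gd (δ (emB r₁ r₂ p.1 1) + δ (emB r₁ r₂ p.2 1))
                (s - lam (emB r₁ r₂ p.1 1) - lam (emB r₁ r₂ p.2 1))))
        * (∏ p ∈ Finset.univ.filter (fun p : Fin r₂ × Fin r₂ => p.1 < p.2),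
            GammaC (1 - s + -s2 p.1 + -s2 p.2 + ((k p.1 : ℂ) + (k p.2 : ℂ) - 2) / 2) *
            GammaC (1 - s + -s2 p.1 + -s2 p.2 + ((k p.1 : ℂ) - (k p.2 : ℂ)) / 2)) := by
    rw [← Finset.prod_mul_distrib, ← Finset.prod_mul_distrib]
    refine Finset.prod_congr rfl fun p hp => ?_
    have hplt : p.1 < p.2 := (Finset.mem_filter.mp hp).2
    have hkk : k p.2 ≤ k p.1 := hkdec p.1 p.2 (le_of_lt hplt)
    have hltval : (p.1 : ℕ) < (p.2 : ℕ) := Fin.lt_def.mp hplt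
    set w1 := s - lam (emB r₁ r₂ p.1 1) - lam (emB r₁ r₂ p.2 0) with hw1def
    set w2 := s - lam (emB r₁ r₂ p.1 1) - lam (emB r₁ r₂ p.2 1) with hw2def
    have ew1 : w1 = s + s2 p.1 + s2 p.2 - ((k p.1 : ℂ) - 1)/2 + ((k p.2 : ℂ) - 1)/2 := by
      rw [hw1def, hl1 p.1, hl0 p.2]; ring
    have ew2 : w2 = s + s2 p.1 + s2 p.2 - ((k p.1 : ℂ) - 1)/2 - ((k p.2 : ℂ) - 1)/2 := by
      rw [hw2def, hl1 p.1, hl1 p.2]; ring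
    have hwa : ∀ m : ℤ, w1 ≠ (m : ℂ) := by
      intro m
      exact hs (emB r₁ r₂ p.1 1) (emB r₁ r₂ p.2 0)
        (Fin.lt_def.mpr (by simp only [emB, finval0, finval1]; omega)) m
    have hwb : ∀ m : ℤ, w2 ≠ (m : ℂ) := by
      intro m
      exact hs (emB r₁ r₂ p.1 1) (emB r₁ r₂ p.2 1)
        (Fin.lt_def.mpr (by simp only [emB, finval1]; omega)) m
    have hpar1 : ((δ (emB r₁ r₂ p.1 0) + δ (emB r₁ r₂ p.2 0))
        + (δ (emB r₁ r₂ p.1 1) + δ (emB r₁ r₂ p.2 0)) + (k p.1 - 1)) % 2 = 1 := by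
      rw [hd0 p.1, hd0 p.2, hd1 p.1]
      have h1 := (hε' p.1).2
      have h2 := hk2 p.1
      omega
    have hpar2 : ((δ (emB r₁ r₂ p.1 0) + δ (emB r₁ r₂ p.2 1))
        + (δ (emB r₁ r₂ p.1 1) + δ (emB r₁ r₂ p.2 1)) + (k p.1 - 1)) % 2 = 1 := by
      rw [hd0 p.1, hd1 p.2, hd1 p.1]
      have h1 := (hε' p.1).2
      have h2 := hk2 p.1
      omega
    have H1 := GammaC_reflect (k p.1 - 1) (δ (emB r₁ r₂ p.1 0) + δ (emB r₁ r₂ p.2 0))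
      (δ (emB r₁ r₂ p.1 1) + δ (emB r₁ r₂ p.2 0)) hpar1 w1 hwa
    have H2 := GammaC_reflect (k p.1 - 1) (δ (emB r₁ r₂ p.1 0) + δ (emB r₁ r₂ p.2 1))
      (δ (emB r₁ r₂ p.1 1) + δ (emB r₁ r₂ p.2 1)) hpar2 w2 hwb
    have hII : Complex.I ^ (-2 * (k p.1 : ℤ))
        = Complex.I ^ (-((k p.1 - 1 : ℕ) : ℤ) - 1) * Complex.I ^ (-((k p.1 - 1 : ℕ) : ℤ) - 1)
        := by
      rw [← zpow_add₀ Complex.I_ne_zero]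
      congr 1
      have := hk2 p.1
      omega
    rw [show s + s2 p.1 + s2 p.2 + ((k p.1 : ℂ) + (k p.2 : ℂ) - 2) / 2
        = w1 + ((k p.1 - 1 : ℕ) : ℂ) by rw [hkc p.1, ew1]; ring,
      show s + s2 p.1 + s2 p.2 + ((k p.1 : ℂ) - (k p.2 : ℂ)) / 2
        = w2 + ((k p.1 - 1 : ℕ) : ℂ) by rw [hkc p.1, ew2]; ring,
      show (1:ℂ) - s + -s2 p.1 + -s2 p.2 + ((k p.1 : ℂ) + (k p.2 : ℂ) - 2) / 2
        = 1 - w2 by rw [ew2]; ring,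
      show (1:ℂ) - s + -s2 p.1 + -s2 p.2 + ((k p.1 : ℂ) - (k p.2 : ℂ)) / 2
        = 1 - w1 by rw [ew1]; ring,
      show s - lam (emB r₁ r₂ p.1 0) - lam (emB r₁ r₂ p.2 0) = w1 + ((k p.1 - 1 : ℕ) : ℂ) by
        rw [hkc p.1, hw1def, hl0 p.1, hl1 p.1]; ring,
      show s - lam (emB r₁ r₂ p.1 0) - lam (emB r₁ r₂ p.2 1) = w2 + ((k p.1 - 1 : ℕ) : ℂ) by
        rw [hkc p.1, hw2def, hl0 p.1, hl1 p.1]; ring,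
      hII]
    rw [H1, H2]; ring
  rw [K1, K2, K3, K4]
  have homega2 : (∏ j : Fin r₂, Complex.I
        ^ ((k j : ℤ) * (2 * ((j : ℕ) + 1 : ℤ) - ((r₁ : ℤ) + 2 * (r₂ : ℤ))) - (ε' j : ℤ)))
      = (∏ i : Fin r₁, ∏ j : Fin r₂, Complex.I ^ (-(k j : ℤ)))
        * (∏ j : Fin r₂, Complex.I ^ (-(ε' j : ℤ)))
        * (∏ p ∈ Finset.univ.filter (fun p : Fin r₂ × Fin r₂ => p.1 < p.2),
            Complex.I ^ (-2 * (k p.1 : ℤ))) := by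
    have h2 : (∏ i : Fin r₁, ∏ j : Fin r₂, Complex.I ^ (-(k j : ℤ)))
        = ∏ j : Fin r₂, Complex.I ^ (-(k j : ℤ) * (r₁ : ℤ)) := by
      rw [Finset.prod_const, ← Finset.prod_pow]
      refine Finset.prod_congr rfl fun j _ => ?_
      rw [Finset.card_univ, Fintype.card_fin, ← zpow_natCast (Complex.I ^ (-(k j : ℤ))),
        ← zpow_mul]
    have h4 : (∏ p ∈ Finset.univ.filter (fun p : Fin r₂ × Fin r₂ => p.1 < p.2),
          Complex.I ^ (-2 * (k p.1 : ℤ)))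
        = ∏ j : Fin r₂, Complex.I ^ (-2 * (k j : ℤ) * ((r₂ - 1 - (j:ℕ) : ℕ) : ℤ)) := by
      have h4a : (∏ p ∈ Finset.univ.filter (fun p : Fin r₂ × Fin r₂ => p.1 < p.2),
            Complex.I ^ (-2 * (k p.1 : ℤ)))
          = ∏ j : Fin r₂, ∏ l ∈ Finset.univ.filter (fun l : Fin r₂ => j < l),
              Complex.I ^ (-2 * (k j : ℤ)) :=
        Finset.prod_finset_product'
          (f := fun (c _ : Fin r₂) => Complex.I ^ (-2 * (k c : ℤ)))
          (Finset.univ.filter (fun p : Fin r₂ × Fin r₂ => p.1 < p.2)) Finset.univ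
          (fun j : Fin r₂ => Finset.univ.filter (fun l : Fin r₂ => j < l))
          (by intro q; simp [Finset.mem_filter])
      rw [h4a]
      refine Finset.prod_congr rfl fun j _ => ?_
      rw [Finset.prod_const,
        show Finset.univ.filter (fun l : Fin r₂ => j < l) = Finset.Ioi j by ext x; simp,
        Fin.card_Ioi, ← zpow_natCast (Complex.I ^ (-2 * (k j : ℤ))), ← zpow_mul]
    rw [h2, h4, ← Finset.prod_mul_distrib, ← Finset.prod_mul_distrib]
    refine Finset.prod_congr rfl fun j _ => ?_
    rw [← zpow_add₀ Complex.I_ne_zero, ← zpow_add₀ Complex.I_ne_zero]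
    congr 1
    have hj := j.2
    have hcast : ((r₂ - 1 - (j:ℕ) : ℕ) : ℤ) = (r₂ : ℤ) - 1 - ((j:ℕ) : ℤ) := by omega
    rw [hcast]
    ring
  rw [homega2]
  ring
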